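/- Let ε ∈ (0,1) and W, W̃ : 𝒳 → 𝒫(𝒴) be channels with d(W,W̃) ≤ ε, where d(W,W̃) = max_{x} Σ_{y} |W(y|x)−W̃(y|x)|. For any n ∈ ℕ, finite sets 𝒰, 𝒱, uniform P_U, conditional P_{V|U}, and stochastic encoder E : 𝒱 → 𝒫(𝒳ⁿ), let Yⁿ and Ỹⁿ be the outputs of the memoryless extensions Wⁿ and W̃ⁿ when the input is generated via U → V → Xⁿ. Then |I(V;Yⁿ|U) − I(V;Ỹⁿ|U)| ≤ n·(4ε log|𝒴| + 4H₂(ε)). -/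

import Mathlib

open Finset Real

noncomputable def H2 (e : ℝ) : ℝ := -(e * Real.logb 2 e) - (1 - e) * Real.logb 2 (1 - e)

def IsPMF {α : Type*} [Fintype α] (p : α → ℝ) : Prop :=
  (∀ a, 0 ≤ p a) ∧ ∑ a, p a = 1

noncomputable def ent {α : Type*} [Fintype α] (p : α → ℝ) : ℝ :=
  -∑ a, p a * Real.logb 2 (p a)

/-- Conditional mutual information `I(B ; C | A)` for a joint distribution on `α × β × γ`. -/
noncomputable def condMI {α β γ : Type*} [Fintype α] [Fintype β] [Fintype γ]
    (p : α × β × γ → ℝ) : ℝ :=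
  ent (fun x : α × β => ∑ c, p (x.1, x.2, c)) + ent (fun x : α × γ => ∑ b, p (x.1, b, x.2))
    - ent p - ent (fun a => ∑ b, ∑ c, p (a, b, c))

noncomputable def eta (x : ℝ) : ℝ := -(x * Real.logb 2 x)

lemma eta_zero : eta 0 = 0 := by simp [eta]
lemma eta_one : eta 1 = 0 := by simp [eta]

lemma eta_nonneg {x : ℝ} (h0 : 0 ≤ x) (h1 : x ≤ 1) : 0 ≤ eta x := by
  rcases eq_or_lt_of_le h0 with h | h
  · simp [← h, eta]
  · have : Real.logb 2 x ≤ 0 := Real.logb_nonpos (by norm_num) h0 h1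
    simpa [eta] using mul_nonneg h.le (neg_nonneg.2 this)

lemma ent_eq_sum_eta {α : Type*} [Fintype α] (p : α → ℝ) : ent p = ∑ a, eta (p a) := by
  simp [ent, eta]

lemma H2_eq (e : ℝ) : H2 e = eta e + eta (1 - e) := by simp [H2, eta]; ring

lemma H2_nonneg {e : ℝ} (h0 : 0 ≤ e) (h1 : e ≤ 1) : 0 ≤ H2 e := by
  rw [H2_eq]
  exact add_nonneg (eta_nonneg h0 h1) (eta_nonneg (by linarith) (by linarith))

lemma eta_le_H2 {e : ℝ} (h0 : 0 ≤ e) (h1 : e ≤ 1) : eta e ≤ H2 e := by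
  rw [H2_eq]; nlinarith [eta_nonneg (by linarith : (0:ℝ) ≤ 1 - e) (by linarith : 1 - e ≤ 1)]

lemma self_le_H2 {e : ℝ} (h0 : 0 ≤ e) (h1 : e ≤ 1/2) : e ≤ H2 e := by
  have h2 : eta e ≥ e := by
    rcases eq_or_lt_of_le h0 with h | h
    · simp [← h, eta]
    · have hhalf : Real.logb 2 (1/2 : ℝ) = -1 := by
        rw [show (1/2:ℝ) = 2⁻¹ by norm_num, Real.logb_inv, Real.logb_self_eq_one (by norm_num)]
      have hle : Real.logb 2 e ≤ -1 := by
        have := Real.logb_le_logb_of_le (by norm_num : (1:ℝ) < 2) h (by linarith : e ≤ 1/2)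
        rw [hhalf] at this; exact this
      have : e * Real.logb 2 e ≤ e * (-1) := mul_le_mul_of_nonneg_left hle h.le
      simp only [eta, ge_iff_le]; linarith
  have := eta_nonneg (by linarith : (0:ℝ) ≤ 1 - e) (by linarith : 1 - e ≤ 1)
  rw [H2_eq]; linarith

-- up direction
lemma eta_sub_eta_le {a b : ℝ} (hb : 0 ≤ b) (hab : b ≤ a) (ha1 : a ≤ 1) :
    eta a - eta b ≤ eta (a - b) := by
  rcases eq_or_lt_of_le (hb.trans hab) with h | ha
  · have hb0 : b = 0 := le_antisymm (hab.trans h.symm.le) hb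
    simp [← h, hb0, eta_zero]
  · have key : ∀ c : ℝ, 0 ≤ c → c ≤ a → -(c * Real.logb 2 a) ≤ eta c := by
      intro c hc hca
      rcases eq_or_lt_of_le hc with h | h
      · simp [← h, eta]
      · have : Real.logb 2 c ≤ Real.logb 2 a := Real.logb_le_logb_of_le (by norm_num) h hca
        simp only [eta, neg_le_neg_iff]
        nlinarith
    have h1 := key b hb hab
    have h2 := key (a - b) (by linarith) (by linarith)
    have : eta a = -(b * Real.logb 2 a) + -((a - b) * Real.logb 2 a) := by simp [eta]; ring
    linarith

-- down direction
lemma eta_sub_eta_le' {a b : ℝ} (hb : 0 ≤ b) (hab : b ≤ a) (ha1 : a ≤ 1) :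
    eta b - eta a ≤ (a - b) / Real.log 2 := by
  have hl2 : (0:ℝ) < Real.log 2 := Real.log_pos (by norm_num)
  rcases eq_or_lt_of_le hb with h | hbpos
  · have h1 : eta b = 0 := by rw [← h, eta_zero]
    have h2 : 0 ≤ eta a := eta_nonneg (hb.trans hab) ha1
    have h3 : 0 ≤ (a - b)/Real.log 2 := div_nonneg (by linarith) hl2.le
    linarith
  · have hapos : 0 < a := lt_of_lt_of_le hbpos hab
    have e1 : eta b - eta a = b * (Real.logb 2 a - Real.logb 2 b) + (a - b) * Real.logb 2 a := by
      simp [eta]; ring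
    have e2 : Real.logb 2 a - Real.logb 2 b = Real.log (a/b) / Real.log 2 := by
      rw [Real.log_div (ne_of_gt hapos) (ne_of_gt hbpos)]
      simp [Real.logb]; ring
    have e3 : Real.log (a/b) ≤ a/b - 1 := Real.log_le_sub_one_of_pos (by positivity)
    have e4 : (a - b) * Real.logb 2 a ≤ 0 :=
      mul_nonpos_of_nonneg_of_nonpos (by linarith) (Real.logb_nonpos (by norm_num) hapos.le ha1)
    have e5 : b * (Real.logb 2 a - Real.logb 2 b) ≤ (a - b) / Real.log 2 := by
      rw [e2]
      rw [div_eq_mul_inv, div_eq_mul_inv, ← mul_assoc]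
      have : b * Real.log (a/b) ≤ a - b := by
        calc b * Real.log (a/b) ≤ b * (a/b - 1) := by nlinarith
          _ = a - b := by field_simp
      have hinv : (0:ℝ) ≤ (Real.log 2)⁻¹ := by positivity
      exact mul_le_mul_of_nonneg_right this hinv
    linarith

lemma abs_eta_sub_eta {a b : ℝ} (ha0 : 0 ≤ a) (ha1 : a ≤ 1) (hb0 : 0 ≤ b) (hb1 : b ≤ 1) :
    |eta a - eta b| ≤ eta |a - b| + |a - b| / Real.log 2 := by
  have hl2 : (0:ℝ) < Real.log 2 := Real.log_pos (by norm_num)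
  wlog hab : b ≤ a generalizing a b
  · rw [abs_sub_comm, abs_sub_comm a b]; exact this hb0 hb1 ha0 ha1 (by linarith)
  rw [abs_of_nonneg (by linarith : (0:ℝ) ≤ a - b)]
  have h1 := eta_sub_eta_le hb0 hab ha1
  have h2 := eta_sub_eta_le' hb0 hab ha1
  have h3 : 0 ≤ eta (a - b) := eta_nonneg (by linarith) (by linarith)
  have h4 : 0 ≤ (a - b)/Real.log 2 := div_nonneg (by linarith) hl2.le
  rw [abs_sub_le_iff]
  constructor <;> linarith

lemma pmf_le_one {α : Type*} [Fintype α] {p : α → ℝ} (hp : IsPMF p) (a : α) : p a ≤ 1 := by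
  rw [← hp.2]
  exact Finset.single_le_sum (fun i _ => hp.1 i) (Finset.mem_univ a)

lemma sum_eta_le {Y : Type*} [Fintype Y] [Nonempty Y] (t : Y → ℝ) (ht0 : ∀ y, 0 ≤ t y)
    {ε : ℝ} (hε0 : 0 < ε) (hε1 : ε ≤ 1) (hδε : ∑ y, t y ≤ ε) :
    ∑ y, eta (t y) ≤ (∑ y, t y) * Real.logb 2 (Fintype.card Y) + eta ε
      + (ε - ∑ y, t y) / Real.log 2 := by
  have hl2 : (0:ℝ) < Real.log 2 := Real.log_pos (by norm_num)
  set m : ℕ := Fintype.card Y with hm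
  have hmpos : (0:ℝ) < m := by exact_mod_cast Fintype.card_pos
  -- pointwise bound : eta (t y) ≤ (ε/m - t y)/log 2 + t y * logb 2 m + t y * logb 2 ε⁻¹
  have key : ∀ y, eta (t y) ≤ (ε/m - t y)/Real.log 2 + t y * Real.logb 2 m
      + t y * Real.logb 2 ε⁻¹ := by
    intro y
    rcases eq_or_lt_of_le (ht0 y) with h | h
    · rw [← h, eta_zero]
      have : 0 ≤ (ε/m)/Real.log 2 := by positivity
      simpa using this
    · have e1 : eta (t y) = t y * Real.log (ε/(m * t y)) / Real.log 2
          + t y * Real.logb 2 m + t y * Real.logb 2 ε⁻¹ := by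
        have h1 : Real.log (ε/(m * t y)) = Real.log ε - Real.log m - Real.log (t y) := by
          rw [Real.log_div (ne_of_gt hε0) (by positivity), Real.log_mul (by positivity) (ne_of_gt h)]
          ring
        simp only [eta, Real.logb, Real.log_inv]
        rw [h1]; field_simp; ring
      rw [e1]
      have e2 : Real.log (ε/(m * t y)) ≤ ε/(m * t y) - 1 :=
        Real.log_le_sub_one_of_pos (by positivity)
      have e3 : t y * Real.log (ε/(m * t y)) ≤ ε/m - t y := by
        calc t y * Real.log (ε/(m * t y)) ≤ t y * (ε/(m * t y) - 1) := by nlinarith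
          _ = ε/m - t y := by field_simp
      have e4 : t y * Real.log (ε/(m * t y)) / Real.log 2 ≤ (ε/m - t y)/Real.log 2 := by
        gcongr
      linarith
  have hsum : ∑ y, eta (t y) ≤ ∑ y, ((ε/m - t y)/Real.log 2 + t y * Real.logb 2 m
      + t y * Real.logb 2 ε⁻¹) := Finset.sum_le_sum (fun y _ => key y)
  have hsplit : ∑ y, ((ε/m - t y)/Real.log 2 + t y * Real.logb 2 m + t y * Real.logb 2 ε⁻¹)
      = (ε - ∑ y, t y)/Real.log 2 + (∑ y, t y) * Real.logb 2 m
        + (∑ y, t y) * Real.logb 2 ε⁻¹ := by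
    rw [Finset.sum_add_distrib, Finset.sum_add_distrib, ← Finset.sum_mul, ← Finset.sum_mul,
      ← Finset.sum_div]
    congr 2
    rw [Finset.sum_sub_distrib, Finset.sum_const, Finset.card_univ]
    congr 1
    rw [← hm]
    rw [nsmul_eq_mul, mul_div_assoc', mul_div_cancel_left₀ _ hmpos.ne']
  have hlast : (∑ y, t y) * Real.logb 2 ε⁻¹ ≤ eta ε := by
    have h1 : 0 ≤ Real.logb 2 ε⁻¹ := Real.logb_nonneg (by norm_num) (by
      have hi : ε * ε⁻¹ = 1 := mul_inv_cancel₀ (ne_of_gt hε0)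
      have hinv : (0:ℝ) < ε⁻¹ := by positivity
      nlinarith)
    have h2 : eta ε = ε * Real.logb 2 ε⁻¹ := by simp [eta, Real.logb_inv]
    rw [h2]
    exact mul_le_mul_of_nonneg_right hδε h1
  calc ∑ y, eta (t y) ≤ _ := hsum
    _ = _ := hsplit
    _ ≤ _ := by linarith

lemma fannes {Y : Type*} [Fintype Y] [Nonempty Y] (hm2 : 2 ≤ Fintype.card Y) {ε : ℝ}
    (hε0 : 0 < ε) (hε2 : ε ≤ 1/2) (p q : Y → ℝ) (hp : IsPMF p) (hq : IsPMF q)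
    (hδ : ∑ y, |p y - q y| ≤ ε) :
    |ent p - ent q| ≤ 2 * ε * Real.logb 2 (Fintype.card Y) + 2 * H2 ε := by
  have hl2 : (0:ℝ) < Real.log 2 := Real.log_pos (by norm_num)
  have hl2' : Real.log 2 > 0.6931471803 := Real.log_two_gt_d9
  set m : ℕ := Fintype.card Y with hm
  have hlogm : 1 ≤ Real.logb 2 (m:ℝ) := by
    have hcast : (2:ℝ) ≤ (m:ℝ) := by exact_mod_cast hm2
    have h := Real.logb_le_logb_of_le (by norm_num : (1:ℝ) < 2) (by norm_num : (0:ℝ) < 2) hcast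
    rwa [Real.logb_self_eq_one (by norm_num)] at h
  set t : Y → ℝ := fun y => |p y - q y| with ht
  set δ : ℝ := ∑ y, t y with hδdef
  have hδ0 : 0 ≤ δ := Finset.sum_nonneg (fun y _ => abs_nonneg _)
  have step1 : |ent p - ent q| ≤ ∑ y, |eta (p y) - eta (q y)| := by
    rw [ent_eq_sum_eta, ent_eq_sum_eta, ← Finset.sum_sub_distrib]
    exact Finset.abs_sum_le_sum_abs _ _
  have step2 : ∀ y, |eta (p y) - eta (q y)| ≤ eta (t y) + t y / Real.log 2 := fun y =>
    abs_eta_sub_eta (hp.1 y) (pmf_le_one hp y) (hq.1 y) (pmf_le_one hq y)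
  have step3 : ∑ y, |eta (p y) - eta (q y)| ≤ ∑ y, eta (t y) + δ / Real.log 2 := by
    calc ∑ y, |eta (p y) - eta (q y)| ≤ ∑ y, (eta (t y) + t y / Real.log 2) :=
          Finset.sum_le_sum (fun y _ => step2 y)
      _ = ∑ y, eta (t y) + δ / Real.log 2 := by
          rw [Finset.sum_add_distrib, ← Finset.sum_div]
  have step4 : ∑ y, eta (t y) ≤ δ * Real.logb 2 (m:ℝ) + eta ε + (ε - δ) / Real.log 2 :=
    sum_eta_le t (fun y => abs_nonneg _) hε0 (by linarith) hδ
  have hbound : |ent p - ent q| ≤ δ * Real.logb 2 (m:ℝ) + eta ε + ε / Real.log 2 := by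
    have : (ε - δ)/Real.log 2 + δ/Real.log 2 = ε / Real.log 2 := by field_simp; ring
    linarith
  have b1 : δ * Real.logb 2 (m:ℝ) ≤ ε * Real.logb 2 (m:ℝ) :=
    mul_le_mul_of_nonneg_right hδ (by linarith)
  have b2 : eta ε ≤ H2 ε := eta_le_H2 hε0.le (by linarith)
  have b3 : ε / Real.log 2 ≤ ε * Real.logb 2 (m:ℝ) + H2 ε := by
    have h1 : ε / Real.log 2 ≤ 2 * ε := by
      rw [div_le_iff₀ hl2]; nlinarith
    have h2 : ε ≤ ε * Real.logb 2 (m:ℝ) := le_mul_of_one_le_right hε0.le hlogm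
    have h3 : ε ≤ H2 ε := self_le_H2 hε0.le hε2
    linarith
  linarith

lemma eta_mul (a b : ℝ) : eta (a * b) = a * eta b + b * eta a := by
  rcases eq_or_ne a 0 with h | ha
  · simp [h, eta_zero, eta]
  rcases eq_or_ne b 0 with h | hb
  · simp [h, eta_zero, eta]
  simp only [eta, Real.logb_mul ha hb]
  ring

lemma step_lemma {G Y : Type*} [Fintype G] [Fintype Y] [Nonempty Y]
    (hm2 : 2 ≤ Fintype.card Y) {ε : ℝ} (hε0 : 0 < ε) (hε2 : ε ≤ 1/2)
    (p q : G × Y → ℝ) (hp : IsPMF p) (hq : IsPMF q)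
    (hmarg : ∀ g, ∑ y, p (g, y) = ∑ y, q (g, y))
    (hL1 : ∀ g, ∑ y, |p (g, y) - q (g, y)| ≤ ε * ∑ y, p (g, y)) :
    |ent p - ent q| ≤ 2 * ε * Real.logb 2 (Fintype.card Y) + 2 * H2 ε := by
  set B : ℝ := 2 * ε * Real.logb 2 (Fintype.card Y) + 2 * H2 ε with hB
  have hlogm : 0 ≤ Real.logb 2 (Fintype.card Y) := by
    apply Real.logb_nonneg (by norm_num)
    have : (2:ℝ) ≤ (Fintype.card Y : ℝ) := by exact_mod_cast hm2
    linarith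
  have hB0 : 0 ≤ B := by
    have := H2_nonneg hε0.le (by linarith : ε ≤ 1)
    positivity
  have key : ∀ g, |∑ y, eta (p (g, y)) - ∑ y, eta (q (g, y))| ≤ (∑ y, p (g, y)) * B := by
    intro g
    set c : ℝ := ∑ y, p (g, y) with hc
    have hc0 : 0 ≤ c := Finset.sum_nonneg (fun y _ => hp.1 _)
    rcases eq_or_lt_of_le hc0 with h | hcpos
    · have hp0 : ∀ y, p (g, y) = 0 := by
        intro y
        have := (Finset.sum_eq_zero_iff_of_nonneg (fun y _ => hp.1 (g, y))).1 h.symm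
        exact this y (Finset.mem_univ y)
      have hq0 : ∀ y, q (g, y) = 0 := by
        intro y
        have hqc : ∑ y, q (g, y) = 0 := by rw [← hmarg g]; exact h.symm
        exact (Finset.sum_eq_zero_iff_of_nonneg (fun y _ => hq.1 (g, y))).1 hqc y
          (Finset.mem_univ y)
      rw [← h]
      simp [hp0, hq0, eta_zero]
    · set p1 : Y → ℝ := fun y => p (g, y) / c with hp1
      set q1 : Y → ℝ := fun y => q (g, y) / c with hq1
      have hp1pmf : IsPMF p1 := by
        constructor
        · intro y; exact div_nonneg (hp.1 _) hc0
        · rw [← Finset.sum_div]; field_simp; exact hc.symm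
      have hq1pmf : IsPMF q1 := by
        constructor
        · intro y; exact div_nonneg (hq.1 _) hc0
        · rw [← Finset.sum_div, ← hmarg g]; field_simp; exact hc.symm
      have hL1' : ∑ y, |p1 y - q1 y| ≤ ε := by
        have : ∀ y, |p1 y - q1 y| = |p (g, y) - q (g, y)| / c := by
          intro y
          rw [hp1, hq1]
          rw [div_sub_div_same, abs_div, abs_of_pos hcpos]
        rw [Finset.sum_congr rfl (fun y _ => this y), ← Finset.sum_div]
        rw [div_le_iff₀ hcpos]
        calc ∑ y, |p (g, y) - q (g, y)| ≤ ε * c := hL1 g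
          _ = ε * c := rfl
      have hfan := fannes hm2 hε0 hε2 p1 q1 hp1pmf hq1pmf hL1'
      have hrel : ∀ (r : G × Y → ℝ) (r1 : Y → ℝ), (∀ y, r (g, y) = c * r1 y) →
          (∑ y, r1 y = 1) → ∑ y, eta (r (g, y)) = c * ent r1 + eta c := by
        intro r r1 hr hr1
        rw [ent_eq_sum_eta]
        calc ∑ y, eta (r (g, y)) = ∑ y, (c * eta (r1 y) + r1 y * eta c) := by
              apply Finset.sum_congr rfl; intro y _; rw [hr y, eta_mul]
          _ = c * ∑ y, eta (r1 y) + (∑ y, r1 y) * eta c := by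
              rw [Finset.sum_add_distrib, Finset.mul_sum, Finset.sum_mul]
          _ = c * ∑ y, eta (r1 y) + eta c := by rw [hr1, one_mul]
      have hpc : ∀ y, p (g, y) = c * p1 y := by
        intro y; rw [hp1]; field_simp
      have hqc : ∀ y, q (g, y) = c * q1 y := by
        intro y; rw [hq1]; field_simp
      rw [hrel p p1 hpc hp1pmf.2, hrel q q1 hqc hq1pmf.2]
      have : c * ent p1 + eta c - (c * ent q1 + eta c) = c * (ent p1 - ent q1) := by ring
      rw [this, abs_mul, abs_of_pos hcpos]
      exact mul_le_mul_of_nonneg_left hfan hc0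
  have expand : ∀ r : G × Y → ℝ, ent r = ∑ g, ∑ y, eta (r (g, y)) := by
    intro r
    rw [ent_eq_sum_eta, Fintype.sum_prod_type]
  rw [expand p, expand q, ← Finset.sum_sub_distrib]
  calc |∑ g, (∑ y, eta (p (g, y)) - ∑ y, eta (q (g, y)))|
      ≤ ∑ g, |∑ y, eta (p (g, y)) - ∑ y, eta (q (g, y))| := Finset.abs_sum_le_sum_abs _ _
    _ ≤ ∑ g, (∑ y, p (g, y)) * B := Finset.sum_le_sum (fun g _ => key g)
    _ = (∑ g, ∑ y, p (g, y)) * B := by rw [Finset.sum_mul]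
    _ = B := by rw [← Fintype.sum_prod_type, hp.2, one_mul]

noncomputable def Qf {A X Y : Type*} [Fintype X] (n : ℕ) (f : Fin n → X → Y → ℝ)
    (r : A × (Fin n → X) → ℝ) : A × (Fin n → Y) → ℝ :=
  fun t => ∑ x : Fin n → X, r (t.1, x) * ∏ i, f i (x i) (t.2 i)

lemma sum_prod_channel {X Y : Type*} [Fintype Y] {n : ℕ} (f : Fin n → X → Y → ℝ)
    (hf : ∀ i x, IsPMF (f i x)) (x : Fin n → X) :
    ∑ y : Fin n → Y, ∏ i, f i (x i) (y i) = 1 := by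
  rw [← Fintype.piFinset_univ, ← Finset.prod_univ_sum]
  rw [Finset.prod_congr rfl (fun i _ => (hf i (x i)).2)]
  simp

lemma ent_comp_equiv {α β : Type*} [Fintype α] [Fintype β] (e : α ≃ β) (p : β → ℝ) :
    ent (fun a => p (e a)) = ent p := by
  unfold ent
  congr 1
  exact Fintype.sum_equiv e _ _ (fun a => rfl)

lemma isPMF_comp_equiv {α β : Type*} [Fintype α] [Fintype β] (e : α ≃ β) (p : β → ℝ)
    (hp : IsPMF p) : IsPMF (fun a => p (e a)) := by
  refine ⟨fun a => hp.1 _, ?_⟩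
  rw [← hp.2]
  exact Fintype.sum_equiv e _ _ (fun a => rfl)

lemma Qf_isPMF {A X Y : Type*} [Fintype A] [Fintype X] [Fintype Y] (n : ℕ)
    (f : Fin n → X → Y → ℝ) (hf : ∀ i x, IsPMF (f i x))
    (r : A × (Fin n → X) → ℝ) (hr : IsPMF r) : IsPMF (Qf n f r) := by
  constructor
  · intro t
    apply Finset.sum_nonneg
    intro x _
    exact mul_nonneg (hr.1 _) (Finset.prod_nonneg (fun i _ => (hf i (x i)).1 _))
  · rw [Fintype.sum_prod_type]
    have : ∀ a : A, ∑ y : Fin n → Y, Qf n f r (a, y) = ∑ x : Fin n → X, r (a, x) := by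
      intro a
      unfold Qf
      rw [Finset.sum_comm]
      apply Finset.sum_congr rfl
      intro x _
      show ∑ y : Fin n → Y, r (a, x) * ∏ i, f i (x i) (y i) = r (a, x)
      rw [← Finset.mul_sum, sum_prod_channel f hf x, mul_one]
    rw [Finset.sum_congr rfl (fun a _ => this a), ← Fintype.sum_prod_type]
    exact hr.2

lemma split_at_self {Y : Type*} {n : ℕ} (k : Fin n) (yk : Y) (yr : {j : Fin n // j ≠ k} → Y) :
    (Equiv.piSplitAt k (fun _ => Y)).symm (yk, yr) k = yk := by
  simp [Equiv.piSplitAt_symm_apply]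

lemma split_at_ne {Y : Type*} {n : ℕ} (k : Fin n) (yk : Y) (yr : {j : Fin n // j ≠ k} → Y)
    (j : Fin n) (h : j ≠ k) :
    (Equiv.piSplitAt k (fun _ => Y)).symm (yk, yr) j = yr ⟨j, h⟩ := by
  simp [Equiv.piSplitAt_symm_apply, h]

lemma prod_split {Y : Type*} {n : ℕ} (k : Fin n) (φ : Fin n → Y → ℝ) (yk : Y)
    (yr : {j : Fin n // j ≠ k} → Y) :
    ∏ i, φ i ((Equiv.piSplitAt k (fun _ => Y)).symm (yk, yr) i)
      = φ k yk * ∏ j : {j : Fin n // j ≠ k}, φ j.1 (yr j) := by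
  rw [← Finset.mul_prod_erase Finset.univ _ (Finset.mem_univ k), split_at_self]
  congr 1
  rw [Finset.prod_subtype (Finset.univ.erase k)
    (p := fun j : Fin n => j ≠ k) (by intro x; simp)
    (fun i => φ i ((Equiv.piSplitAt k (fun _ => Y)).symm (yk, yr) i))]
  apply Finset.prod_congr rfl
  intro j _
  rw [split_at_ne k yk yr j.1 j.2]

lemma channel_step {A X Y : Type*} [Fintype A] [Fintype X] [Fintype Y] [Nonempty Y]
    (hm2 : 2 ≤ Fintype.card Y) {ε : ℝ} (hε0 : 0 < ε) (hε2 : ε ≤ 1/2)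
    {n : ℕ} (k : Fin n) (f g : Fin n → X → Y → ℝ)
    (hf : ∀ i x, IsPMF (f i x)) (hg : ∀ i x, IsPMF (g i x))
    (hfg : ∀ i, i ≠ k → f i = g i)
    (hL1 : ∀ x, ∑ y, |f k x y - g k x y| ≤ ε)
    (r : A × (Fin n → X) → ℝ) (hr : IsPMF r) :
    |ent (Qf n f r) - ent (Qf n g r)| ≤ 2 * ε * Real.logb 2 (Fintype.card Y) + 2 * H2 ε := by
  classical
  set R := {j : Fin n // j ≠ k} with hR
  set E : ((A × (R → Y)) × Y) ≃ (A × (Fin n → Y)) :=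
    (Equiv.prodAssoc A (R → Y) Y).trans ((Equiv.refl A).prodCongr
      ((Equiv.prodComm (R → Y) Y).trans (Equiv.piSplitAt k (fun _ : Fin n => Y)).symm)) with hE
  have hEapp : ∀ (a : A) (yr : R → Y) (yk : Y),
      E ((a, yr), yk) = (a, (Equiv.piSplitAt k (fun _ : Fin n => Y)).symm (yk, yr)) :=
    fun a yr yk => rfl
  set p' : (A × (R → Y)) × Y → ℝ := fun t => Qf n f r (E t) with hp'
  set q' : (A × (R → Y)) × Y → ℝ := fun t => Qf n g r (E t) with hq'
  have hentp : ent p' = ent (Qf n f r) := ent_comp_equiv E _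
  have hentq : ent q' = ent (Qf n g r) := ent_comp_equiv E _
  have hppmf : IsPMF p' := isPMF_comp_equiv E _ (Qf_isPMF n f hf r hr)
  have hqpmf : IsPMF q' := isPMF_comp_equiv E _ (Qf_isPMF n g hg r hr)
  -- expand p' on groups
  have hpexp : ∀ (a : A) (yr : R → Y) (yk : Y),
      p' ((a, yr), yk) = ∑ x : Fin n → X,
        r (a, x) * (f k (x k) yk * ∏ j : R, f j.1 (x j.1) (yr j)) := by
    intro a yr yk
    show Qf n f r (E ((a, yr), yk)) = _
    rw [hEapp]
    unfold Qf
    apply Finset.sum_congr rfl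
    intro x _
    congr 1
    exact prod_split k (fun i => f i (x i)) yk yr
  have hqexp : ∀ (a : A) (yr : R → Y) (yk : Y),
      q' ((a, yr), yk) = ∑ x : Fin n → X,
        r (a, x) * (g k (x k) yk * ∏ j : R, f j.1 (x j.1) (yr j)) := by
    intro a yr yk
    show Qf n g r (E ((a, yr), yk)) = _
    rw [hEapp]
    unfold Qf
    apply Finset.sum_congr rfl
    intro x _
    rw [prod_split k (fun i => g i (x i)) yk yr]
    congr 2
    exact Finset.prod_congr rfl (fun j _ => by rw [hfg j.1 j.2])
  -- nonnegativity of weights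
  have hw : ∀ (a : A) (x : Fin n → X) (yr : R → Y),
      0 ≤ r (a, x) * ∏ j : R, f j.1 (x j.1) (yr j) :=
    fun a x yr => mul_nonneg (hr.1 _) (Finset.prod_nonneg (fun j _ => (hf j.1 (x j.1)).1 _))
  -- marginal equality
  have hmarg : ∀ gr : A × (R → Y), ∑ yk, p' (gr, yk) = ∑ yk, q' (gr, yk) := by
    rintro ⟨a, yr⟩
    have h1 : ∀ (F : Fin n → X → Y → ℝ) (hF : ∀ i x, IsPMF (F i x)),
        ∑ yk, ∑ x : Fin n → X, r (a, x) * (F k (x k) yk * ∏ j : R, f j.1 (x j.1) (yr j))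
          = ∑ x : Fin n → X, r (a, x) * ∏ j : R, f j.1 (x j.1) (yr j) := by
      intro F hF
      rw [Finset.sum_comm]
      apply Finset.sum_congr rfl
      intro x _
      have : ∑ yk, r (a, x) * (F k (x k) yk * ∏ j : R, f j.1 (x j.1) (yr j))
          = r (a, x) * ((∑ yk, F k (x k) yk) * ∏ j : R, f j.1 (x j.1) (yr j)) := by
        rw [Finset.sum_mul, Finset.mul_sum]
      rw [this, (hF k (x k)).2, one_mul]
    rw [Finset.sum_congr rfl (fun yk _ => hpexp a yr yk),
        Finset.sum_congr rfl (fun yk _ => hqexp a yr yk), h1 f hf, h1 g hg]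
  -- L1 bound per group
  have hL1' : ∀ gr : A × (R → Y), ∑ yk, |p' (gr, yk) - q' (gr, yk)| ≤ ε * ∑ yk, p' (gr, yk) := by
    rintro ⟨a, yr⟩
    have hmargval : ∑ yk, p' ((a, yr), yk)
        = ∑ x : Fin n → X, r (a, x) * ∏ j : R, f j.1 (x j.1) (yr j) := by
      rw [Finset.sum_congr rfl (fun yk _ => hpexp a yr yk)]
      rw [Finset.sum_comm]
      apply Finset.sum_congr rfl
      intro x _
      have : ∑ yk, r (a, x) * (f k (x k) yk * ∏ j : R, f j.1 (x j.1) (yr j))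
          = r (a, x) * ((∑ yk, f k (x k) yk) * ∏ j : R, f j.1 (x j.1) (yr j)) := by
        rw [Finset.sum_mul, Finset.mul_sum]
      rw [this, (hf k (x k)).2, one_mul]
    rw [hmargval]
    calc ∑ yk, |p' ((a, yr), yk) - q' ((a, yr), yk)|
        ≤ ∑ yk, ∑ x : Fin n → X, (r (a, x) * ∏ j : R, f j.1 (x j.1) (yr j))
            * |f k (x k) yk - g k (x k) yk| := by
          apply Finset.sum_le_sum
          intro yk _
          rw [hpexp a yr yk, hqexp a yr yk, ← Finset.sum_sub_distrib]
          calc |∑ x : Fin n → X, (r (a, x) * (f k (x k) yk * ∏ j : R, f j.1 (x j.1) (yr j))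
                - r (a, x) * (g k (x k) yk * ∏ j : R, f j.1 (x j.1) (yr j)))|
              ≤ ∑ x : Fin n → X, |r (a, x) * (f k (x k) yk * ∏ j : R, f j.1 (x j.1) (yr j))
                - r (a, x) * (g k (x k) yk * ∏ j : R, f j.1 (x j.1) (yr j))| :=
                Finset.abs_sum_le_sum_abs _ _
            _ = ∑ x : Fin n → X, (r (a, x) * ∏ j : R, f j.1 (x j.1) (yr j))
                * |f k (x k) yk - g k (x k) yk| := by
                apply Finset.sum_congr rfl
                intro x _
                rw [show r (a, x) * (f k (x k) yk * ∏ j : R, f j.1 (x j.1) (yr j))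
                    - r (a, x) * (g k (x k) yk * ∏ j : R, f j.1 (x j.1) (yr j))
                    = (r (a, x) * ∏ j : R, f j.1 (x j.1) (yr j))
                      * (f k (x k) yk - g k (x k) yk) by ring]
                rw [abs_mul, abs_of_nonneg (hw a x yr)]
      _ = ∑ x : Fin n → X, (r (a, x) * ∏ j : R, f j.1 (x j.1) (yr j))
            * ∑ yk, |f k (x k) yk - g k (x k) yk| := by
          rw [Finset.sum_comm]
          exact Finset.sum_congr rfl (fun x _ => by rw [Finset.mul_sum])
      _ ≤ ∑ x : Fin n → X, (r (a, x) * ∏ j : R, f j.1 (x j.1) (yr j)) * ε := by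
          apply Finset.sum_le_sum
          intro x _
          exact mul_le_mul_of_nonneg_left (hL1 (x k)) (hw a x yr)
      _ = ε * ∑ x : Fin n → X, r (a, x) * ∏ j : R, f j.1 (x j.1) (yr j) := by
          rw [← Finset.sum_mul, mul_comm]
  have := step_lemma hm2 hε0 hε2 p' q' hppmf hqpmf hmarg hL1'
  rwa [hentp, hentq] at this

lemma entropy_diff {A X Y : Type*} [Fintype A] [Fintype X] [Fintype Y] [Nonempty Y]
    (hm2 : 2 ≤ Fintype.card Y) {ε : ℝ} (hε0 : 0 < ε) (hε2 : ε ≤ 1/2)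
    (n : ℕ) (W W' : X → Y → ℝ) (hW : ∀ x, IsPMF (W x)) (hW' : ∀ x, IsPMF (W' x))
    (hd : ∀ x, ∑ y, |W x y - W' x y| ≤ ε)
    (r : A × (Fin n → X) → ℝ) (hr : IsPMF r) :
    |ent (Qf n (fun _ => W) r) - ent (Qf n (fun _ => W') r)|
      ≤ n * (2 * ε * Real.logb 2 (Fintype.card Y) + 2 * H2 ε) := by
  classical
  set B : ℝ := 2 * ε * Real.logb 2 (Fintype.card Y) + 2 * H2 ε with hB
  set fk : ℕ → Fin n → X → Y → ℝ := fun t i => if (i : ℕ) < t then W' else W with hfk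
  have hch : ∀ t i x, IsPMF (fk t i x) := by
    intro t i x
    dsimp only [fk]
    split_ifs
    · exact hW' x
    · exact hW x
  set F : ℕ → ℝ := fun t => ent (Qf n (fk t) r) with hF
  have claim : ∀ j : ℕ, j ≤ n → |F 0 - F j| ≤ j * B := by
    intro j
    induction j with
    | zero => intro _; simp
    | succ j ih =>
      intro hj1
      have hjn : j < n := hj1
      have hstep : |F j - F (j + 1)| ≤ B := by
        apply channel_step hm2 hε0 hε2 (⟨j, hjn⟩ : Fin n) (fk j) (fk (j+1))
          (hch j) (hch (j+1)) ?_ ?_ r hr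
        · intro i hi
          have hvi : (i : ℕ) ≠ j := by
            intro h; apply hi; exact Fin.ext h
          dsimp only [fk]
          by_cases h : (i : ℕ) < j
          · rw [if_pos h, if_pos (by omega)]
          · rw [if_neg h, if_neg (by omega)]
        · intro x
          dsimp only [fk]
          simp only [Fin.val_mk, lt_irrefl, if_false, Nat.lt_succ_self, if_true]
          exact hd x
      have ih' := ih (le_of_lt hj1)
      calc |F 0 - F (j + 1)| ≤ |F 0 - F j| + |F j - F (j + 1)| := by
            have := abs_sub_le (F 0) (F j) (F (j+1)); linarith
        _ ≤ j * B + B := add_le_add ih' hstep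
        _ = (j + 1 : ℕ) * B := by push_cast; ring
  have hfk0 : fk 0 = (fun _ => W) := by funext i; simp [fk]
  have hfkn : fk n = (fun _ => W') := by funext i; simp [fk, i.isLt]
  have h0 : F 0 = ent (Qf n (fun _ => W) r) := by
    show ent (Qf n (fk 0) r) = _
    rw [hfk0]
  have hn : F n = ent (Qf n (fun _ => W') r) := by
    show ent (Qf n (fk n) r) = _
    rw [hfkn]
  have := claim n le_rfl
  rwa [h0, hn] at this

lemma ent_nonneg {α : Type*} [Fintype α] {p : α → ℝ} (hp : IsPMF p) : 0 ≤ ent p := by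
  rw [ent_eq_sum_eta]
  exact Finset.sum_nonneg (fun a _ => eta_nonneg (hp.1 a) (pmf_le_one hp a))

lemma gibbs {α : Type*} [Fintype α] (p q : α → ℝ) (hp : IsPMF p) (hq0 : ∀ a, 0 ≤ q a)
    (hq1 : ∑ a, q a ≤ 1) (hsupp : ∀ a, p a ≠ 0 → q a ≠ 0) :
    -∑ a, p a * Real.logb 2 (p a) ≤ -∑ a, p a * Real.logb 2 (q a) := by
  have hl2 : (0:ℝ) < Real.log 2 := Real.log_pos (by norm_num)
  have key : ∀ a, p a * (Real.logb 2 (q a) - Real.logb 2 (p a)) ≤ (q a - p a) / Real.log 2 := by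
    intro a
    rcases eq_or_ne (p a) 0 with h | h
    · rw [h]
      simp only [zero_mul, sub_zero]
      exact div_nonneg (by simpa [h] using hq0 a) hl2.le
    · have hppos : 0 < p a := lt_of_le_of_ne (hp.1 a) (Ne.symm h)
      have hqpos : 0 < q a := lt_of_le_of_ne (hq0 a) (Ne.symm (hsupp a h))
      have e1 : Real.logb 2 (q a) - Real.logb 2 (p a) = Real.log (q a / p a) / Real.log 2 := by
        rw [Real.log_div (ne_of_gt hqpos) (ne_of_gt hppos)]
        simp [Real.logb]; ring
      have e2 : Real.log (q a / p a) ≤ q a / p a - 1 := Real.log_le_sub_one_of_pos (by positivity)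
      rw [e1]
      rw [div_eq_mul_inv, ← mul_assoc, div_eq_mul_inv]
      apply mul_le_mul_of_nonneg_right _ (by positivity : (0:ℝ) ≤ (Real.log 2)⁻¹)
      calc p a * Real.log (q a / p a) ≤ p a * (q a / p a - 1) := by nlinarith
        _ = q a - p a := by field_simp
  have hsum : ∑ a, p a * (Real.logb 2 (q a) - Real.logb 2 (p a)) ≤ 0 := by
    calc ∑ a, p a * (Real.logb 2 (q a) - Real.logb 2 (p a))
        ≤ ∑ a, (q a - p a) / Real.log 2 := Finset.sum_le_sum (fun a _ => key a)
      _ = (∑ a, q a - 1) / Real.log 2 := by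
          rw [← Finset.sum_div, Finset.sum_sub_distrib, hp.2]
      _ ≤ 0 := div_nonpos_of_nonpos_of_nonneg (by linarith) hl2.le
  have : ∑ a, p a * (Real.logb 2 (q a) - Real.logb 2 (p a))
      = ∑ a, p a * Real.logb 2 (q a) - ∑ a, p a * Real.logb 2 (p a) := by
    rw [← Finset.sum_sub_distrib]
    exact Finset.sum_congr rfl (fun a _ => by ring)
  linarith

lemma marg_isPMF {α β : Type*} [Fintype α] [Fintype β] {p : α × β → ℝ} (hp : IsPMF p) :
    IsPMF (fun a => ∑ b, p (a, b)) := by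
  refine ⟨fun a => Finset.sum_nonneg (fun b _ => hp.1 _), ?_⟩
  rw [← Fintype.sum_prod_type]
  exact hp.2

lemma ent_marg_le {α β : Type*} [Fintype α] [Fintype β] (p : α × β → ℝ) (hp : IsPMF p) :
    ent (fun a => ∑ b, p (a, b)) ≤ ent p := by
  rw [ent_eq_sum_eta, ent_eq_sum_eta, Fintype.sum_prod_type]
  apply Finset.sum_le_sum
  intro a _
  have hs : ∀ b, p (a, b) ≤ ∑ b', p (a, b') :=
    fun b => Finset.single_le_sum (fun b' _ => hp.1 (a, b')) (Finset.mem_univ b)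
  have hs0 : 0 ≤ ∑ b', p (a, b') := Finset.sum_nonneg (fun b' _ => hp.1 _)
  -- eta (∑ b, p (a,b)) ≤ ∑ b, eta (p (a,b)) : superadditivity direction?  NO:
  -- we need: eta (marg) ≤ ∑ eta;  eta (s) = -s * logb s = ∑_b -(p b) * logb s ≤ ∑_b eta (p b)
  have expand : eta (∑ b, p (a, b)) = ∑ b, -(p (a, b) * Real.logb 2 (∑ b', p (a, b'))) := by
    rw [eta]
    rw [Finset.sum_neg_distrib, ← Finset.sum_mul]
  rw [expand]
  apply Finset.sum_le_sum
  intro b _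
  rcases eq_or_ne (p (a, b)) 0 with h | h
  · rw [h]; simp [eta_zero]
  · have hppos : 0 < p (a, b) := lt_of_le_of_ne (hp.1 _) (Ne.symm h)
    have : Real.logb 2 (p (a, b)) ≤ Real.logb 2 (∑ b', p (a, b')) :=
      Real.logb_le_logb_of_le (by norm_num) hppos (hs b)
    rw [eta]
    nlinarith

lemma ent_le_marg_add_log {α β : Type*} [Fintype α] [Fintype β] [Nonempty β]
    (p : α × β → ℝ) (hp : IsPMF p) :
    ent p ≤ ent (fun a => ∑ b, p (a, b)) + Real.logb 2 (Fintype.card β) := by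
  classical
  set s : α → ℝ := fun a => ∑ b, p (a, b) with hs
  have hs0 : ∀ a, 0 ≤ s a := fun a => Finset.sum_nonneg (fun b _ => hp.1 _)
  have hcard : (0:ℝ) < (Fintype.card β : ℝ) := by exact_mod_cast Fintype.card_pos
  set q : α × β → ℝ := fun t => s t.1 / (Fintype.card β : ℝ) with hq
  have hq0 : ∀ t, 0 ≤ q t := fun t => div_nonneg (hs0 _) hcard.le
  have hq1 : ∑ t, q t ≤ 1 := by
    rw [Fintype.sum_prod_type]
    have : ∀ a, ∑ _b : β, q (a, _b) = s a := by
      intro a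
      show ∑ _b : β, s a / (Fintype.card β : ℝ) = s a
      rw [Finset.sum_const, Finset.card_univ, nsmul_eq_mul]
      field_simp
    rw [Finset.sum_congr rfl (fun a _ => this a)]
    rw [show ∑ a, s a = 1 from (marg_isPMF hp).2]
  have hsupp : ∀ t, p t ≠ 0 → q t ≠ 0 := by
    rintro ⟨a, b⟩ h
    have hppos : 0 < p (a, b) := lt_of_le_of_ne (hp.1 _) (Ne.symm h)
    have : 0 < s a := lt_of_lt_of_le hppos
      (Finset.single_le_sum (fun b' _ => hp.1 (a, b')) (Finset.mem_univ b))
    show s a / (Fintype.card β : ℝ) ≠ 0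
    positivity
  have hg := gibbs p q hp hq0 hq1 hsupp
  have hrw : ∑ t, p t * Real.logb 2 (q t)
      = ∑ t, p t * Real.logb 2 (s t.1) - Real.logb 2 (Fintype.card β) := by
    have hpt : ∀ t : α × β, p t * Real.logb 2 (q t)
        = p t * Real.logb 2 (s t.1) - p t * Real.logb 2 (Fintype.card β) := by
      intro t
      rcases eq_or_ne (p t) 0 with h | h
      · rw [h]; ring
      · have hspos : 0 < s t.1 := lt_of_lt_of_le (lt_of_le_of_ne (hp.1 _) (Ne.symm h))
          (Finset.single_le_sum (fun b' _ => hp.1 (t.1, b')) (Finset.mem_univ t.2))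
        show p t * Real.logb 2 (s t.1 / (Fintype.card β : ℝ)) = _
        rw [Real.logb_div (ne_of_gt hspos) (ne_of_gt hcard)]
        ring
    rw [Finset.sum_congr rfl (fun t _ => hpt t), Finset.sum_sub_distrib, ← Finset.sum_mul, hp.2,
      one_mul]
  have hm : ∑ t : α × β, p t * Real.logb 2 (s t.1) = ∑ a, s a * Real.logb 2 (s a) := by
    rw [Fintype.sum_prod_type]
    apply Finset.sum_congr rfl
    intro a _
    show ∑ y : β, p (a, y) * Real.logb 2 (s a) = s a * Real.logb 2 (s a)
    rw [← Finset.sum_mul]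
  rw [ent, ent]
  have := hg
  rw [hrw, hm] at this
  linarith

lemma sum3 {α β γ : Type*} [Fintype α] [Fintype β] [Fintype γ] (g : α × β × γ → ℝ) :
    ∑ t, g t = ∑ a, ∑ b, ∑ c, g (a, b, c) := by
  rw [Fintype.sum_prod_type]
  exact Finset.sum_congr rfl (fun a _ => Fintype.sum_prod_type _)

lemma condMI_nonneg {α β γ : Type*} [Fintype α] [Fintype β] [Fintype γ]
    (p : α × β × γ → ℝ) (hp : IsPMF p) : 0 ≤ condMI p := by
  classical
  set m12 : α × β → ℝ := fun x => ∑ c, p (x.1, x.2, c) with hm12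
  set m13 : α × γ → ℝ := fun x => ∑ b, p (x.1, b, x.2) with hm13
  set m1 : α → ℝ := fun a => ∑ b, ∑ c, p (a, b, c) with hm1
  have hm12nn : ∀ a b, 0 ≤ m12 (a, b) := fun a b => Finset.sum_nonneg (fun c _ => hp.1 _)
  have hm13nn : ∀ a c, 0 ≤ m13 (a, c) := fun a c => Finset.sum_nonneg (fun b _ => hp.1 _)
  have hm1nn : ∀ a, 0 ≤ m1 a :=
    fun a => Finset.sum_nonneg (fun b _ => Finset.sum_nonneg (fun c _ => hp.1 _))
  have hm1sum : ∀ a, ∑ b, m12 (a, b) = m1 a := by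
    intro a
    show ∑ b, ∑ c, p (a, b, c) = ∑ b, ∑ c, p (a, b, c)
    rfl
  have hm1sum' : ∀ a, ∑ c, m13 (a, c) = m1 a := by
    intro a
    show ∑ c, ∑ b, p (a, b, c) = ∑ b, ∑ c, p (a, b, c)
    exact Finset.sum_comm
  set q : α × β × γ → ℝ := fun t =>
    if m1 t.1 = 0 then 0 else m12 (t.1, t.2.1) * m13 (t.1, t.2.2) / m1 t.1 with hqdef
  have hq0 : ∀ t, 0 ≤ q t := by
    rintro ⟨a, b, c⟩
    show 0 ≤ if m1 a = 0 then 0 else m12 (a, b) * m13 (a, c) / m1 a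
    split_ifs with h
    · exact le_rfl
    · exact div_nonneg (mul_nonneg (hm12nn a b) (hm13nn a c)) (hm1nn a)
  have hq1 : ∑ t, q t ≤ 1 := by
    rw [sum3]
    have : ∀ a, ∑ b, ∑ c, q (a, b, c) ≤ m1 a := by
      intro a
      by_cases h : m1 a = 0
      · have : ∀ b c, q (a, b, c) = 0 := by
          intro b c; show (if m1 a = 0 then 0 else _) = 0; rw [if_pos h]
        simp only [this]
        simp [h]
      · have hpos : 0 < m1 a := lt_of_le_of_ne (hm1nn a) (Ne.symm h)
        have : ∑ b, ∑ c, q (a, b, c) = m1 a := by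
          have e1 : ∀ b c, q (a, b, c) = m12 (a, b) * m13 (a, c) / m1 a := by
            intro b c; show (if m1 a = 0 then 0 else _) = _; rw [if_neg h]
          calc ∑ b, ∑ c, q (a, b, c) = ∑ b, ∑ c, m12 (a, b) * m13 (a, c) / m1 a := by
                exact Finset.sum_congr rfl (fun b _ => Finset.sum_congr rfl (fun c _ => e1 b c))
            _ = (∑ b, m12 (a, b)) * (∑ c, m13 (a, c)) / m1 a := by
                rw [Finset.sum_mul_sum]
                rw [Finset.sum_div]
                apply Finset.sum_congr rfl
                intro b _
                rw [Finset.sum_div]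
            _ = m1 a := by rw [hm1sum, hm1sum']; field_simp
        rw [this]
    calc ∑ a, ∑ b, ∑ c, q (a, b, c) ≤ ∑ a, m1 a := Finset.sum_le_sum (fun a _ => this a)
      _ = 1 := by rw [← sum3]; exact hp.2
  have hsupp : ∀ t, p t ≠ 0 → q t ≠ 0 := by
    rintro ⟨a, b, c⟩ h
    have hppos : 0 < p (a, b, c) := lt_of_le_of_ne (hp.1 _) (Ne.symm h)
    have h12 : 0 < m12 (a, b) := lt_of_lt_of_le hppos
      (Finset.single_le_sum (fun c' _ => hp.1 (a, b, c')) (Finset.mem_univ c))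
    have h13 : 0 < m13 (a, c) := lt_of_lt_of_le hppos
      (Finset.single_le_sum (fun b' _ => hp.1 (a, b', c)) (Finset.mem_univ b))
    have h1 : 0 < m1 a := by
      have := Finset.single_le_sum (fun b' _ => Finset.sum_nonneg
        (fun c' (_ : c' ∈ Finset.univ) => hp.1 (a, b', c'))) (Finset.mem_univ b)
      calc (0:ℝ) < m12 (a, b) := h12
        _ ≤ m1 a := this
    show (if m1 a = 0 then 0 else m12 (a, b) * m13 (a, c) / m1 a) ≠ 0
    rw [if_neg (ne_of_gt h1)]
    positivity
  have hg := gibbs p q hp hq0 hq1 hsupp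
  have hA : ∑ t, p t * Real.logb 2 (q t) = ∑ t, p t * (Real.logb 2 (m12 (t.1, t.2.1))
      + Real.logb 2 (m13 (t.1, t.2.2)) - Real.logb 2 (m1 t.1)) := by
    apply Finset.sum_congr rfl
    rintro ⟨a, b, c⟩ _
    rcases eq_or_ne (p (a, b, c)) 0 with h | h
    · show p (a,b,c) * _ = p (a,b,c) * _
      rw [h, zero_mul, zero_mul]
    · have hppos : 0 < p (a, b, c) := lt_of_le_of_ne (hp.1 _) (Ne.symm h)
      have h12 : 0 < m12 (a, b) := lt_of_lt_of_le hppos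
        (Finset.single_le_sum (fun c' _ => hp.1 (a, b, c')) (Finset.mem_univ c))
      have h13 : 0 < m13 (a, c) := lt_of_lt_of_le hppos
        (Finset.single_le_sum (fun b' _ => hp.1 (a, b', c)) (Finset.mem_univ b))
      have h1 : 0 < m1 a := lt_of_lt_of_le h12
        (Finset.single_le_sum (fun b' _ => Finset.sum_nonneg
          (fun c' (_ : c' ∈ Finset.univ) => hp.1 (a, b', c'))) (Finset.mem_univ b))
      show p (a,b,c) * Real.logb 2 (if m1 a = 0 then 0 else m12 (a,b) * m13 (a,c) / m1 a)
        = p (a,b,c) * (Real.logb 2 (m12 (a,b)) + Real.logb 2 (m13 (a,c)) - Real.logb 2 (m1 a))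
      rw [if_neg (ne_of_gt h1)]
      rw [Real.logb_div (by positivity) (ne_of_gt h1), Real.logb_mul (ne_of_gt h12) (ne_of_gt h13)]
  have hB : ∑ t : α × β × γ, p t * Real.logb 2 (m12 (t.1, t.2.1))
      = ∑ x : α × β, m12 x * Real.logb 2 (m12 x) := by
    rw [sum3, Fintype.sum_prod_type]
    apply Finset.sum_congr rfl
    intro a _
    apply Finset.sum_congr rfl
    intro b _
    show ∑ c, p (a, b, c) * Real.logb 2 (m12 (a, b)) = m12 (a, b) * Real.logb 2 (m12 (a, b))
    rw [← Finset.sum_mul]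
  have hC : ∑ t : α × β × γ, p t * Real.logb 2 (m13 (t.1, t.2.2))
      = ∑ x : α × γ, m13 x * Real.logb 2 (m13 x) := by
    rw [sum3, Fintype.sum_prod_type]
    apply Finset.sum_congr rfl
    intro a _
    rw [Finset.sum_comm]
    apply Finset.sum_congr rfl
    intro c _
    show ∑ b, p (a, b, c) * Real.logb 2 (m13 (a, c)) = m13 (a, c) * Real.logb 2 (m13 (a, c))
    rw [← Finset.sum_mul]
  have hD : ∑ t : α × β × γ, p t * Real.logb 2 (m1 t.1)
      = ∑ a, m1 a * Real.logb 2 (m1 a) := by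
    rw [sum3]
    apply Finset.sum_congr rfl
    intro a _
    show ∑ b, ∑ c, p (a, b, c) * Real.logb 2 (m1 a) = m1 a * Real.logb 2 (m1 a)
    have hin : ∀ b, ∑ c, p (a, b, c) * Real.logb 2 (m1 a)
        = (∑ c, p (a, b, c)) * Real.logb 2 (m1 a) := fun b => (Finset.sum_mul _ _ _).symm
    rw [Finset.sum_congr rfl (fun b _ => hin b), ← Finset.sum_mul]
  have hsplit : ∑ t, p t * (Real.logb 2 (m12 (t.1, t.2.1))
      + Real.logb 2 (m13 (t.1, t.2.2)) - Real.logb 2 (m1 t.1))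
      = (∑ x : α × β, m12 x * Real.logb 2 (m12 x))
        + (∑ x : α × γ, m13 x * Real.logb 2 (m13 x))
        - ∑ a, m1 a * Real.logb 2 (m1 a) := by
    rw [← hB, ← hC, ← hD, ← Finset.sum_add_distrib, ← Finset.sum_sub_distrib]
    exact Finset.sum_congr rfl (fun t _ => by ring)
  rw [hA, hsplit] at hg
  show 0 ≤ ent m12 + ent m13 - ent p - ent m1
  rw [ent, ent, ent, ent]
  linarith

lemma condMI_le {α β γ : Type*} [Fintype α] [Fintype β] [Fintype γ] [Nonempty γ]
    (p : α × β × γ → ℝ) (hp : IsPMF p) : condMI p ≤ Real.logb 2 (Fintype.card γ) := by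
  classical
  set m12 : α × β → ℝ := fun x => ∑ c, p (x.1, x.2, c) with hm12
  set m13 : α × γ → ℝ := fun x => ∑ b, p (x.1, b, x.2) with hm13
  set m1 : α → ℝ := fun a => ∑ b, ∑ c, p (a, b, c) with hm1
  -- ent m12 ≤ ent p
  have h1 : ent m12 ≤ ent p := by
    have h := ent_marg_le (fun t : (α × β) × γ => p (Equiv.prodAssoc α β γ t))
      (isPMF_comp_equiv _ p hp)
    rw [ent_comp_equiv] at h
    have heq : (fun x : α × β => ∑ c : γ,
        (fun t : (α × β) × γ => p (Equiv.prodAssoc α β γ t)) (x, c)) = m12 := by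
      funext x; rfl
    rw [heq] at h
    exact h
  -- m13 is a PMF on α × γ
  have hm13pmf : IsPMF m13 := by
    constructor
    · intro x; exact Finset.sum_nonneg (fun b _ => hp.1 _)
    · rw [Fintype.sum_prod_type]
      have : ∀ a, ∑ c, m13 (a, c) = ∑ b, ∑ c, p (a, b, c) := by
        intro a
        show ∑ c, ∑ b, p (a, b, c) = ∑ b, ∑ c, p (a, b, c)
        exact Finset.sum_comm
      rw [Finset.sum_congr rfl (fun a _ => this a), ← sum3]
      exact hp.2
  have h2 : ent m13 ≤ ent (fun a => ∑ c, m13 (a, c)) + Real.logb 2 (Fintype.card γ) :=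
    ent_le_marg_add_log m13 hm13pmf
  have h3 : (fun a => ∑ c, m13 (a, c)) = m1 := by
    funext a
    show ∑ c, ∑ b, p (a, b, c) = ∑ b, ∑ c, p (a, b, c)
    exact Finset.sum_comm
  rw [h3] at h2
  show ent m12 + ent m13 - ent p - ent m1 ≤ Real.logb 2 (Fintype.card γ)
  linarith

/-- continuity of conditional mutual information for memoryless
channel extensions with input generated via the Markov chain U — V — Xⁿ
(uniform `P_U`). -/
theorem mutual_information_continuity
    {X Y U V : Type*} [Fintype X] [Fintype Y] [Fintype U] [Fintype V]
    [Nonempty X] [Nonempty Y] [Nonempty U] [Nonempty V]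
    (ε : ℝ) (hε : ε ∈ Set.Ioo (0 : ℝ) 1)
    (W W' : X → Y → ℝ) (hW : ∀ x, IsPMF (W x)) (hW' : ∀ x, IsPMF (W' x))
    (hd : ∀ x, ∑ y, |W x y - W' x y| ≤ ε)
    (n : ℕ) (PVU : U → V → ℝ) (E : V → (Fin n → X) → ℝ)
    (hPVU : ∀ u, IsPMF (PVU u)) (hE : ∀ v, IsPMF (E v))
    (P P' : U × V × (Fin n → Y) → ℝ)
    (hP : P = fun t => ∑ x : Fin n → X,
        (∏ i : Fin n, W (x i) (t.2.2 i)) * E t.2.1 x * PVU t.1 t.2.1 * (Fintype.card U : ℝ)⁻¹)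
    (hP' : P' = fun t => ∑ x : Fin n → X,
        (∏ i : Fin n, W' (x i) (t.2.2 i)) * E t.2.1 x * PVU t.1 t.2.1 * (Fintype.card U : ℝ)⁻¹) :
    |condMI P - condMI P'| ≤ n * (4 * ε * Real.logb 2 (Fintype.card Y) + 4 * H2 ε) := by
  obtain ⟨hε0, hε1⟩ := hε
  have hH2 : 0 ≤ H2 ε := H2_nonneg hε0.le hε1.le
  by_cases hm : Fintype.card Y = 1
  · -- degenerate case : |Y| = 1, so W = W'
    obtain ⟨y0, hy0⟩ := Fintype.card_eq_one_iff.1 hm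
    have hone : ∀ (F : X → Y → ℝ), (∀ x, IsPMF (F x)) → ∀ x y, F x y = 1 := by
      intro F hF x y
      have hsum : ∑ y', F x y' = F x y0 :=
        Finset.sum_eq_single_of_mem y0 (Finset.mem_univ y0)
          (fun b _ hb => (hb (hy0 b)).elim)
      have := (hF x).2
      rw [hsum] at this
      rw [hy0 y]
      exact this
    have hWW : W = W' := by
      funext x y
      rw [hone W hW x y, hone W' hW' x y]
    have hPP : P = P' := by rw [hP, hP', hWW]
    rw [hPP, sub_self, abs_zero, hm]
    have : Real.logb 2 ((1:ℕ):ℝ) = 0 := by norm_num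
    rw [this]
    have hn : (0:ℝ) ≤ n := Nat.cast_nonneg n
    nlinarith
  · have hm2 : 2 ≤ Fintype.card Y := by
      have := Fintype.card_pos (α := Y); omega
    have hcU : (0:ℝ) < (Fintype.card U : ℝ) := by exact_mod_cast Fintype.card_pos
    -- the joint source distribution on (U × V) × Xⁿ
    set r2 : (U × V) × (Fin n → X) → ℝ :=
      fun t => E t.1.2 t.2 * PVU t.1.1 t.1.2 * (Fintype.card U : ℝ)⁻¹ with hr2def
    have hr2 : IsPMF r2 := by
      constructor
      · rintro ⟨⟨u, v⟩, x⟩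
        exact mul_nonneg (mul_nonneg ((hE v).1 x) ((hPVU u).1 v)) (by positivity)
      · rw [Fintype.sum_prod_type]
        have h1 : ∀ uv : U × V, ∑ x : Fin n → X, r2 (uv, x)
            = PVU uv.1 uv.2 * (Fintype.card U : ℝ)⁻¹ := by
          rintro ⟨u, v⟩
          show ∑ x : Fin n → X, E v x * PVU u v * (Fintype.card U : ℝ)⁻¹ = _
          rw [← Finset.sum_mul, ← Finset.sum_mul, (hE v).2, one_mul]
        rw [Finset.sum_congr rfl (fun uv _ => h1 uv), Fintype.sum_prod_type]
        have h2 : ∀ u : U, ∑ v, PVU u v * (Fintype.card U : ℝ)⁻¹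
            = (Fintype.card U : ℝ)⁻¹ := by
          intro u
          rw [← Finset.sum_mul, (hPVU u).2, one_mul]
        rw [Finset.sum_congr rfl (fun u _ => h2 u), Finset.sum_const, Finset.card_univ,
          nsmul_eq_mul]
        field_simp
    -- the marginal source distribution on U × Xⁿ
    set r1 : U × (Fin n → X) → ℝ :=
      fun t => ∑ v, E v t.2 * PVU t.1 v * (Fintype.card U : ℝ)⁻¹ with hr1def
    have hr1 : IsPMF r1 := by
      constructor
      · rintro ⟨u, x⟩
        exact Finset.sum_nonneg fun v _ =>
          mul_nonneg (mul_nonneg ((hE v).1 x) ((hPVU u).1 v)) (by positivity)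
      · have : ∀ u : U, ∀ x : Fin n → X, r1 (u, x) = ∑ v, r2 ((u, v), x) := by
          intro u x; rfl
        rw [Fintype.sum_prod_type]
        calc ∑ u, ∑ x, r1 (u, x) = ∑ u, ∑ x : Fin n → X, ∑ v, r2 ((u, v), x) := by
              exact Finset.sum_congr rfl fun u _ => Finset.sum_congr rfl fun x _ => this u x
          _ = ∑ u, ∑ v, ∑ x : Fin n → X, r2 ((u, v), x) := by
              exact Finset.sum_congr rfl fun u _ => Finset.sum_comm
          _ = 1 := by
              rw [← Fintype.sum_prod_type (f := fun uv : U × V => ∑ x, r2 (uv, x)),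
                ← Fintype.sum_prod_type]
              exact hr2.2
    -- relating P , P' to Qf
    have hPe : ∀ (WW : X → Y → ℝ) (PPP : U × V × (Fin n → Y) → ℝ),
        (PPP = fun t => ∑ x : Fin n → X,
          (∏ i : Fin n, WW (x i) (t.2.2 i)) * E t.2.1 x * PVU t.1 t.2.1
            * (Fintype.card U : ℝ)⁻¹) →
        PPP = fun t => Qf n (fun _ => WW) r2 ((Equiv.prodAssoc U V (Fin n → Y)).symm t) := by
      rintro WW PPP rfl
      funext t
      obtain ⟨u, v, y⟩ := t
      show ∑ x : Fin n → X, (∏ i : Fin n, WW (x i) (y i)) * E v x * PVU u v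
          * (Fintype.card U : ℝ)⁻¹
        = ∑ x : Fin n → X, (E v x * PVU u v * (Fintype.card U : ℝ)⁻¹)
            * ∏ i : Fin n, WW (x i) (y i)
      exact Finset.sum_congr rfl fun x _ => by ring
    have hPQ := hPe W P hP
    have hPQ' := hPe W' P' hP'
    have hentP : ent P = ent (Qf n (fun _ => W) r2) := by
      rw [hPQ]; exact ent_comp_equiv _ _
    have hentP' : ent P' = ent (Qf n (fun _ => W') r2) := by
      rw [hPQ']; exact ent_comp_equiv _ _
    have hPpmf : IsPMF P := by
      rw [hPQ]
      exact isPMF_comp_equiv _ _ (Qf_isPMF n (fun _ => W) (fun _ => hW) r2 hr2)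
    have hPpmf' : IsPMF P' := by
      rw [hPQ']
      exact isPMF_comp_equiv _ _ (Qf_isPMF n (fun _ => W') (fun _ => hW') r2 hr2)
    -- marginal on U × Yⁿ
    have hm13 : ∀ (WW : X → Y → ℝ) (PPP : U × V × (Fin n → Y) → ℝ),
        (PPP = fun t => ∑ x : Fin n → X,
          (∏ i : Fin n, WW (x i) (t.2.2 i)) * E t.2.1 x * PVU t.1 t.2.1
            * (Fintype.card U : ℝ)⁻¹) →
        (fun x : U × (Fin n → Y) => ∑ v, PPP (x.1, v, x.2)) = Qf n (fun _ => WW) r1 := by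
      rintro WW PPP rfl
      funext t
      obtain ⟨u, y⟩ := t
      show ∑ v, ∑ x : Fin n → X, (∏ i : Fin n, WW (x i) (y i)) * E v x * PVU u v
          * (Fintype.card U : ℝ)⁻¹
        = ∑ x : Fin n → X, (∑ v, E v x * PVU u v * (Fintype.card U : ℝ)⁻¹)
            * ∏ i : Fin n, WW (x i) (y i)
      rw [Finset.sum_comm]
      apply Finset.sum_congr rfl
      intro x _
      rw [Finset.sum_mul]
      exact Finset.sum_congr rfl fun v _ => by ring
    have hm13Q := hm13 W P hP
    have hm13Q' := hm13 W' P' hP'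
    -- marginals on U × V and U agree for P and P'
    have hm12eq : (fun x : U × V => ∑ c, P (x.1, x.2, c))
        = (fun x : U × V => ∑ c, P' (x.1, x.2, c)) := by
      funext uv
      obtain ⟨u, v⟩ := uv
      have key : ∀ (WW : X → Y → ℝ), (∀ x, IsPMF (WW x)) →
          ∑ y : Fin n → Y, ∑ x : Fin n → X, (∏ i : Fin n, WW (x i) (y i)) * E v x * PVU u v
            * (Fintype.card U : ℝ)⁻¹
          = ∑ x : Fin n → X, E v x * PVU u v * (Fintype.card U : ℝ)⁻¹ := by
        intro WW hWW
        rw [Finset.sum_comm]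
        apply Finset.sum_congr rfl
        intro x _
        have : ∀ y : Fin n → Y, (∏ i : Fin n, WW (x i) (y i)) * E v x * PVU u v
            * (Fintype.card U : ℝ)⁻¹
            = (∏ i : Fin n, WW (x i) (y i)) * (E v x * PVU u v * (Fintype.card U : ℝ)⁻¹) := by
          intro y; ring
        rw [Finset.sum_congr rfl fun y _ => this y, ← Finset.sum_mul,
          sum_prod_channel (fun _ => WW) (fun _ => hWW) x, one_mul]
      show ∑ c, P (u, v, c) = ∑ c, P' (u, v, c)
      rw [hP, hP']
      exact (key W hW).trans (key W' hW').symm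
    have hm1eq : (fun a : U => ∑ b, ∑ c, P (a, b, c))
        = (fun a : U => ∑ b, ∑ c, P' (a, b, c)) := by
      funext u
      apply Finset.sum_congr rfl
      intro v _
      exact congrFun hm12eq (u, v)
    by_cases hεhalf : ε ≤ 1/2
    · -- main case : telescoping bound
      have hd1 := entropy_diff (A := U × V) hm2 hε0 hεhalf n W W' hW hW' hd r2 hr2
      have hd2 := entropy_diff (A := U) hm2 hε0 hεhalf n W W' hW hW' hd r1 hr1
      have hdiff : condMI P - condMI P'
          = (ent (Qf n (fun _ => W) r1) - ent (Qf n (fun _ => W') r1))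
            - (ent (Qf n (fun _ => W) r2) - ent (Qf n (fun _ => W') r2)) := by
        show ent (fun x : U × V => ∑ c, P (x.1, x.2, c))
            + ent (fun x : U × (Fin n → Y) => ∑ b, P (x.1, b, x.2))
            - ent P - ent (fun a => ∑ b, ∑ c, P (a, b, c))
          - (ent (fun x : U × V => ∑ c, P' (x.1, x.2, c))
            + ent (fun x : U × (Fin n → Y) => ∑ b, P' (x.1, b, x.2))
            - ent P' - ent (fun a => ∑ b, ∑ c, P' (a, b, c))) = _
        rw [hm12eq, hm1eq, hm13Q, hm13Q', hentP, hentP']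
        ring
      rw [hdiff]
      calc |ent (Qf n (fun _ => W) r1) - ent (Qf n (fun _ => W') r1)
            - (ent (Qf n (fun _ => W) r2) - ent (Qf n (fun _ => W') r2))|
          ≤ |ent (Qf n (fun _ => W) r1) - ent (Qf n (fun _ => W') r1)|
            + |ent (Qf n (fun _ => W) r2) - ent (Qf n (fun _ => W') r2)| := abs_sub _ _
        _ ≤ n * (2 * ε * Real.logb 2 (Fintype.card Y) + 2 * H2 ε)
            + n * (2 * ε * Real.logb 2 (Fintype.card Y) + 2 * H2 ε) := add_le_add hd2 hd1
        _ = n * (4 * ε * Real.logb 2 (Fintype.card Y) + 4 * H2 ε) := by ring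
    · -- large ε : trivial bound
      push_neg at hεhalf
      have hlogm : 0 ≤ Real.logb 2 (Fintype.card Y) := by
        apply Real.logb_nonneg (by norm_num)
        have : (2:ℝ) ≤ (Fintype.card Y : ℝ) := by exact_mod_cast hm2
        linarith
      have hcardfun : Real.logb 2 (Fintype.card (Fin n → Y) : ℝ)
          = n * Real.logb 2 (Fintype.card Y) := by
        rw [Fintype.card_fun, Fintype.card_fin]
        push_cast
        rw [Real.logb_pow]
      have hb1 : |condMI P| ≤ n * Real.logb 2 (Fintype.card Y) := by
        rw [abs_of_nonneg (condMI_nonneg P hPpmf), ← hcardfun]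
        exact condMI_le P hPpmf
      have hb2 : |condMI P'| ≤ n * Real.logb 2 (Fintype.card Y) := by
        rw [abs_of_nonneg (condMI_nonneg P' hPpmf'), ← hcardfun]
        exact condMI_le P' hPpmf'
      have htri : |condMI P - condMI P'| ≤ 2 * (n * Real.logb 2 (Fintype.card Y)) := by
        have := abs_sub (condMI P) (condMI P')
        linarith
      have hn : (0:ℝ) ≤ n := Nat.cast_nonneg n
      have : 2 * (n * Real.logb 2 (Fintype.card Y))
          ≤ n * (4 * ε * Real.logb 2 (Fintype.card Y) + 4 * H2 ε) := by
        have h4 : (2:ℝ) ≤ 4 * ε := by linarith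
        nlinarith [mul_nonneg hn hlogm]
      linarith
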